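/- arXiv:2506.21254 — 2 statements merged into one kernel-verified Lean document; each statement's English description precedes it below -/
import Mathlib

section
/- Let G be a nice graph with maximum degree Δ. Then χ'_s(G) ≤ ME^W(G) + 1 and ME^W(G) + 1 ≤ 3(1 + Δ·χ'_s(G)). -/
open SimpleGraph Finset

variable {V : Type*}

/-- `W.inc u` is the number of edge-traversals of the walk `W` incident to `u`. -/
def SimpleGraph.Walk.inc [DecidableEq V] {G : SimpleGraph V} {a b : V}
    (W : G.Walk a b) (u : V) : ℕ :=
  (W.edges.filter (fun e => u ∈ e)).length

/-- A walk `W` of `G` is irregularising if in the multigraph `G + W` no two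
adjacent vertices have the same degree. -/
def SimpleGraph.Walk.Irregularising [Fintype V] [DecidableEq V] {G : SimpleGraph V}
    [DecidableRel G.Adj] {a b : V} (W : G.Walk a b) : Prop :=
  ∀ ⦃u v : V⦄, G.Adj u v → G.degree u + W.inc u ≠ G.degree v + W.inc v

/-- The vertex sum `σ_ℓ(u)` of a labelling. -/
def vertexSum [Fintype V] [DecidableEq V] (G : SimpleGraph V) [DecidableRel G.Adj]
    (ℓ : Sym2 V → ℕ) (u : V) : ℕ :=
  ∑ w ∈ G.neighborFinset u, ℓ s(u, w)

/-- A labelling is proper if adjacent vertices get distinct sums. -/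
def IsProperLabelling [Fintype V] [DecidableEq V] (G : SimpleGraph V) [DecidableRel G.Adj]
    (ℓ : Sym2 V → ℕ) : Prop :=
  ∀ ⦃u v : V⦄, G.Adj u v → vertexSum G ℓ u ≠ vertexSum G ℓ v

/-- Minimum length of an irregularising walk, as an extended natural number. -/
noncomputable def MLW [Fintype V] [DecidableEq V] (G : SimpleGraph V) [DecidableRel G.Adj] : ℕ∞ :=
  ⨅ (a : V) (b : V) (W : G.Walk a b) (_ : W.Irregularising), (W.length : ℕ∞)

/-- Infimum over irregularising walks of the maximum number of traversals of a single edge. -/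
noncomputable def MEW [Fintype V] [DecidableEq V] (G : SimpleGraph V) [DecidableRel G.Adj] : ℕ∞ :=
  ⨅ (a : V) (b : V) (W : G.Walk a b) (_ : W.Irregularising),
    ((W.edges.toFinset.sup fun e => W.edges.count e : ℕ) : ℕ∞)

/-- Infimum over irregularising walks of `max_u inc_W(u)`. -/
noncomputable def MVW [Fintype V] [DecidableEq V] (G : SimpleGraph V) [DecidableRel G.Adj] : ℕ∞ :=
  ⨅ (a : V) (b : V) (W : G.Walk a b) (_ : W.Irregularising),
    ((Finset.univ.sup fun u => W.inc u : ℕ) : ℕ∞)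

universe u
variable {V : Type u}

namespace SimpleGraph

variable {G : SimpleGraph V}

/-- Walk that bounces `k` times back and forth along an edge. -/
def Walk.bounce {u v : V} (h : G.Adj u v) : ℕ → G.Walk u u
  | 0 => Walk.nil
  | k+1 => Walk.cons h (Walk.cons h.symm (Walk.bounce h k))

lemma Walk.edges_bounce {u v : V} (h : G.Adj u v) (k : ℕ) :
    (Walk.bounce h k).edges = List.replicate (2*k) s(u,v) := by
  induction k with
  | zero => rfl
  | succ k ih =>
      show s(u,v) :: s(v,u) :: (Walk.bounce h k).edges = _
      rw [ih, Sym2.eq_swap, show 2*(k+1) = (2*k+1)+1 by ring,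
        List.replicate_succ, List.replicate_succ]

/-- Concatenation of bounce walks at `v` along a list of neighbors. -/
def Walk.bounces (v : V) (f : V → ℕ) : List {w : V // G.Adj v w} → G.Walk v v
  | [] => Walk.nil
  | w :: L => (Walk.bounce w.2 (f w.1)).append (Walk.bounces v f L)

lemma Walk.mem_of_mem_edges_bounces (v : V) (f : V → ℕ)
    (L : List {w : V // G.Adj v w}) {e : Sym2 V}
    (he : e ∈ (Walk.bounces v f L (G := G)).edges) : v ∈ e := by
  induction L with
  | nil => simp [bounces] at he
  | cons w L ih =>
      rw [bounces, Walk.edges_append, List.mem_append] at he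
      rcases he with he | he
      · rw [Walk.edges_bounce] at he
        rw [List.eq_of_mem_replicate he]
        exact Sym2.mem_mk_left _ _
      · exact ih he

lemma Walk.count_edges_bounces [DecidableEq V] (v : V) (f : V → ℕ)
    (L : List {w : V // G.Adj v w}) (w₀ : V) :
    (Walk.bounces v f L (G := G)).edges.count s(v, w₀)
      = 2 * f w₀ * ((L.map Subtype.val).count w₀) := by
  induction L with
  | nil => simp [bounces]
  | cons w L ih =>
      rw [bounces, Walk.edges_append, List.count_append, ih, Walk.edges_bounce,
        List.count_replicate, List.map_cons, List.count_cons]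
      by_cases hw : (w.1 : V) = w₀
      · subst hw; simp; ring
      · have h2 : ¬ s(v, (w.1 : V)) = s(v, w₀) := fun h => hw (Sym2.congr_right.mp h)
        simp [hw, h2]

end SimpleGraph

variable {V : Type u}

lemma exists_rep_of_mem_edge {G : SimpleGraph V} {e : Sym2 V} {u : V}
    (he : e ∈ G.edgeSet) (hu : u ∈ e) : ∃ w, G.Adj u w ∧ e = s(u, w) := by
  induction e with
  | _ x y =>
    rw [Sym2.mem_iff] at hu
    rw [SimpleGraph.mem_edgeSet] at he
    rcases hu with rfl | rfl
    · exact ⟨y, he, rfl⟩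
    · exact ⟨x, he.symm, Sym2.eq_swap⟩

lemma sum_indicator_eq [Fintype V] [DecidableEq V] (G : SimpleGraph V) [DecidableRel G.Adj]
    (u : V) {e : Sym2 V} (he : e ∈ G.edgeSet) :
    (∑ w ∈ G.neighborFinset u, if e = s(u, w) then 1 else 0)
      = if u ∈ e then 1 else 0 := by
  by_cases hu : u ∈ e
  · obtain ⟨w₀, hadj, rfl⟩ := exists_rep_of_mem_edge he hu
    rw [if_pos hu]
    rw [Finset.sum_congr rfl (fun w _ => by
      rw [show (if s(u, w₀) = s(u, w) then 1 else 0) = if w₀ = w then 1 else 0 by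
        simp only [Sym2.congr_right]])]
    rw [Finset.sum_ite_eq]
    rw [if_pos ((G.mem_neighborFinset u w₀).mpr hadj)]
  · rw [if_neg hu, Finset.sum_eq_zero]
    intro w _
    rw [if_neg]
    intro h; exact hu (h ▸ Sym2.mem_mk_left u w)

lemma filter_length_eq_sum_count [Fintype V] [DecidableEq V] (G : SimpleGraph V)
    [DecidableRel G.Adj] (u : V) :
    ∀ (l : List (Sym2 V)), (∀ e ∈ l, e ∈ G.edgeSet) →
      (l.filter (fun e => u ∈ e)).length = ∑ w ∈ G.neighborFinset u, l.count s(u, w) := by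
  intro l
  induction l with
  | nil => simp
  | cons e l ih =>
      intro hl
      have he : e ∈ G.edgeSet := hl e List.mem_cons_self
      have hl' : ∀ e' ∈ l, e' ∈ G.edgeSet := fun e' h => hl e' (List.mem_cons_of_mem e h)
      rw [List.filter_cons]
      rw [Finset.sum_congr rfl (fun w _ => List.count_cons (a := s(u,w)) (b := e) (l := l))]
      rw [Finset.sum_add_distrib, ← ih hl']
      have : (∑ w ∈ G.neighborFinset u, if e == s(u, w) then 1 else 0)
          = if u ∈ e then 1 else 0 := by
        rw [← sum_indicator_eq G u he]
        exact Finset.sum_congr rfl (fun w _ => by simp [beq_iff_eq])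
      rw [this]
      by_cases hu : u ∈ e
      · simp [hu, Nat.add_comm]
      · simp [hu]

lemma inc_eq_sum_count [Fintype V] [DecidableEq V] {G : SimpleGraph V}
    [DecidableRel G.Adj] {a b : V} (W : G.Walk a b) (u : V) :
    W.inc u = ∑ w ∈ G.neighborFinset u, W.edges.count s(u, w) :=
  filter_length_eq_sum_count G u W.edges (fun _ h => W.edges_subset_edgeSet h)

lemma reachable_induce_of_walk {G : SimpleGraph V} {s : Set V} :
    ∀ {a b : V} (p : G.Walk a b) (hp : ∀ x ∈ p.support, x ∈ s),
      (G.induce s).Reachable ⟨a, hp a p.start_mem_support⟩ ⟨b, hp b p.end_mem_support⟩ := by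
  intro a b p
  induction p with
  | nil => intro hp; exact SimpleGraph.Reachable.refl _
  | @cons a x b h q ih =>
      intro hp
      have hq : ∀ y ∈ q.support, y ∈ s := fun y hy =>
        hp y (List.mem_cons_of_mem _ hy)
      have ha : a ∈ s := hp a (SimpleGraph.Walk.start_mem_support _)
      have hx : x ∈ s := hq x (SimpleGraph.Walk.start_mem_support _)
      have hadj : (G.induce s).Adj ⟨a, ha⟩ ⟨x, hx⟩ := h
      exact (hadj.reachable).trans (ih hq)

lemma exists_adj_of_walk_ne {G : SimpleGraph V} {a b : V} (p : G.Walk a b) (hab : a ≠ b) :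
    ∃ x, G.Adj a x := by
  cases p with
  | nil => exact absurd rfl hab
  | cons h q => exact ⟨_, h⟩

lemma exists_walk_counts : ∀ (n : ℕ) {V : Type u} [Fintype V] [DecidableEq V]
    (G : SimpleGraph V) [DecidableRel G.Adj], Fintype.card V = n → G.Connected →
    ∀ (r : V) (c : Sym2 V → ℕ), (∀ e ∈ G.edgeSet, 2 ≤ c e ∧ c e % 2 = 0) →
    ∃ W : G.Walk r r, ∀ e ∈ G.edgeSet, W.edges.count e = c e := by
  intro n
  induction n using Nat.strong_induction_on with
  | _ n IH =>
  intro V _ _ G _ hcard hconn r c hc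
  by_cases hn : Fintype.card V ≤ 1
  · refine ⟨SimpleGraph.Walk.nil, ?_⟩
    intro e he
    exfalso
    induction e with
    | _ x y =>
      have hxy : x ≠ y := (G.mem_edgeSet.mp he).ne
      have h2 : 1 < Fintype.card V := Fintype.one_lt_card_iff_nontrivial.mpr ⟨⟨x, y, hxy⟩⟩
      omega
  push_neg at hn
  obtain ⟨v, -, hv⟩ := Finset.exists_max_image Finset.univ (G.dist r) ⟨r, Finset.mem_univ r⟩
  have hv' : ∀ u : V, G.dist r u ≤ G.dist r v := fun u => hv u (Finset.mem_univ u)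
  have hvr : v ≠ r := by
    obtain ⟨u, hu⟩ := Fintype.exists_ne_of_one_lt_card hn r
    have h1 : 0 < G.dist r u := hconn.pos_dist_of_ne (Ne.symm hu)
    have h2 : 0 < G.dist r v := lt_of_lt_of_le h1 (hv' u)
    intro h; rw [h, SimpleGraph.dist_self] at h2; omega
  have havoid : ∀ u : V, u ≠ v → ∃ p : G.Walk r u, v ∉ p.support := by
    intro u huv
    obtain ⟨p, hp⟩ := hconn.exists_walk_length_eq_dist r u
    refine ⟨p, fun hvp => ?_⟩
    have h1 : G.dist r v ≤ (p.takeUntil v hvp).length := SimpleGraph.dist_le _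
    have h2 : G.dist v u ≤ (p.dropUntil v hvp).length := SimpleGraph.dist_le _
    have h3 : 0 < G.dist v u := hconn.pos_dist_of_ne (Ne.symm huv)
    have h4 : (p.takeUntil v hvp).length + (p.dropUntil v hvp).length = p.length := by
      rw [← SimpleGraph.Walk.length_append, SimpleGraph.Walk.take_spec]
    have h5 := hv' u
    omega
  set s : Set V := {x | x ≠ v} with hs
  haveI : DecidablePred (· ∈ s) := Classical.decPred _
  set G' : SimpleGraph s := G.induce s with hG'
  haveI : DecidableRel G'.Adj := Classical.decRel _
  have hrs : r ∈ s := Ne.symm hvr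
  have hcard' : Fintype.card s = n - 1 := by
    have h1 : Fintype.card s = Fintype.card {x : V // ¬ (x = v)} :=
      Fintype.card_congr (Equiv.subtypeEquivRight (fun x => Iff.rfl))
    rw [h1, Fintype.card_subtype_compl, Fintype.card_subtype_eq, hcard]
  have hconn' : G'.Connected := by
    have key : ∀ a : s, G'.Reachable ⟨r, hrs⟩ a := by
      intro a
      obtain ⟨p, hp⟩ := havoid a.1 a.2
      have hsup : ∀ x ∈ p.support, x ∈ s := fun x hx hxv => hp (hxv ▸ hx)
      have h2 := reachable_induce_of_walk p hsup
      have e1 : (⟨a.1, hsup a.1 p.end_mem_support⟩ : s) = a := Subtype.ext rfl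
      rw [e1] at h2
      exact h2
    haveI : Nonempty s := ⟨⟨r, hrs⟩⟩
    exact SimpleGraph.Connected.mk (fun a b => (key a).symm.trans (key b))
  set c' : Sym2 s → ℕ := fun e => c (Sym2.map Subtype.val e) with hc'def
  have hc' : ∀ e ∈ G'.edgeSet, 2 ≤ c' e ∧ c' e % 2 = 0 := by
    intro e he
    induction e with
    | _ x y =>
      have hadj : G.Adj x.1 y.1 := he
      simpa [hc'def, Sym2.map_pair_eq] using hc s(x.1, y.1) hadj
  have hlt : n - 1 < n := by omega
  obtain ⟨W', hW'⟩ := IH (n-1) hlt G' hcard' hconn' ⟨r, hrs⟩ c' hc'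
  set hom : G' →g G := ⟨Subtype.val, fun h => h⟩ with hhom
  set W₀ : G.Walk r r := W'.map hom with hW₀
  have hvW₀ : v ∉ W₀.support := by
    rw [hW₀, SimpleGraph.Walk.support_map]
    intro hx
    obtain ⟨x, hx1, hx2⟩ := List.mem_map.mp hx
    exact x.2 hx2
  have hcount₀ : ∀ e ∈ G.edgeSet, v ∉ e → W₀.edges.count e = c e := by
    intro e he hve
    induction e with
    | _ x y =>
      have hx : x ∈ s := fun h => hve (by rw [← h]; exact Sym2.mem_mk_left x y)
      have hy : y ∈ s := fun h => hve (by rw [← h]; exact Sym2.mem_mk_right x y)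
      have hadj : G.Adj x y := he
      have hxy' : G'.Adj ⟨x, hx⟩ ⟨y, hy⟩ := hadj
      have hkey : W₀.edges.count s(x, y) = W'.edges.count s((⟨x,hx⟩ : s), ⟨y,hy⟩) := by
        rw [hW₀, SimpleGraph.Walk.edges_map]
        have h2 : s(x, y) = Sym2.map hom s((⟨x,hx⟩ : s), ⟨y,hy⟩) := by
          rw [Sym2.map_pair_eq]; rfl
        rw [h2]
        exact List.count_map_of_injective W'.edges (Sym2.map ⇑hom)
          (Sym2.map.injective (fun a b hab => Subtype.val_injective hab)) _
      rw [hkey, hW' _ hxy']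
      simp [hc'def, Sym2.map_pair_eq]
  have hcountv : ∀ e ∈ W₀.edges, v ∉ e := by
    intro e hee hve
    obtain ⟨w, hadj, rfl⟩ := exists_rep_of_mem_edge (W₀.edges_subset_edgeSet hee) hve
    exact hvW₀ (SimpleGraph.Walk.fst_mem_support_of_mem_edges W₀ hee)
  obtain ⟨u₀, h₀⟩ : ∃ u₀, G.Adj v u₀ := by
    obtain ⟨p⟩ := hconn v r
    exact exists_adj_of_walk_ne p hvr
  have hu₀v : u₀ ∈ s := fun h => G.irrefl (h ▸ h₀)
  have hu₀supp : u₀ ∈ W₀.support := by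
    by_cases hur : u₀ = r
    · subst hur; exact W₀.start_mem_support
    · obtain ⟨x', hadj'⟩ : ∃ x', G'.Adj ⟨u₀, hu₀v⟩ x' := by
        obtain ⟨p⟩ := hconn' ⟨u₀, hu₀v⟩ ⟨r, hrs⟩
        exact exists_adj_of_walk_ne p (fun h => hur (show u₀ = r from congrArg Subtype.val h))
      have he' : s((⟨u₀, hu₀v⟩ : s), x') ∈ G'.edgeSet := hadj'
      have hpos : 0 < W'.edges.count s((⟨u₀, hu₀v⟩ : s), x') := by
        rw [hW' _ he']
        have := hc' _ he'
        omega
      have hmem := List.count_pos_iff.mp hpos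
      have hsup := SimpleGraph.Walk.fst_mem_support_of_mem_edges W' hmem
      rw [hW₀, SimpleGraph.Walk.support_map]
      exact List.mem_map_of_mem hsup
  set f : V → ℕ := fun w => if w = u₀ then c s(v, u₀) / 2 - 1 else c s(v, w) / 2 with hf
  set L : List {w : V // G.Adj v w} :=
    (G.neighborFinset v).toList.attach.map
      (fun x => ⟨x.1, (G.mem_neighborFinset v x.1).mp (Finset.mem_toList.mp x.2)⟩) with hL
  have hLval : L.map Subtype.val = (G.neighborFinset v).toList := by
    rw [hL, List.map_map]
    exact List.attach_map_subtype_val _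
  have hLcount : ∀ w, G.Adj v w → (L.map Subtype.val).count w = 1 := by
    intro w hw
    rw [hLval]
    exact List.count_eq_one_of_mem (Finset.nodup_toList _)
      (Finset.mem_toList.mpr ((G.mem_neighborFinset v w).mpr hw))
  set C : G.Walk u₀ u₀ :=
    SimpleGraph.Walk.cons h₀.symm
      ((SimpleGraph.Walk.bounces v f L).append (SimpleGraph.Walk.cons h₀ SimpleGraph.Walk.nil))
    with hC
  have hCedges : C.edges = s(u₀, v) :: ((SimpleGraph.Walk.bounces v f L (G := G)).edges ++ [s(v, u₀)]) := by
    rw [hC, SimpleGraph.Walk.edges_cons, SimpleGraph.Walk.edges_append,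
      SimpleGraph.Walk.edges_cons, SimpleGraph.Walk.edges_nil]
  have hC0 : ∀ e : Sym2 V, v ∉ e → C.edges.count e = 0 := by
    intro e hve
    rw [List.count_eq_zero]
    intro hmem
    rw [hCedges] at hmem
    rcases List.mem_cons.mp hmem with rfl | hmem'
    · exact hve (Sym2.mem_mk_right u₀ v)
    · rcases List.mem_append.mp hmem' with hmem'' | hmem''
      · exact hve (SimpleGraph.Walk.mem_of_mem_edges_bounces v f L hmem'')
      · rw [List.mem_singleton] at hmem''
        exact hve (hmem'' ▸ Sym2.mem_mk_left v u₀)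
  have hC1 : ∀ w, G.Adj v w → C.edges.count s(v, w) = c s(v, w) := by
    intro w hw
    have hcv := hc s(v, w) hw
    have hb := SimpleGraph.Walk.count_edges_bounces (G := G) v f L w
    rw [hLcount w hw, mul_one] at hb
    rw [hCedges, List.count_cons, List.count_append, List.count_singleton, hb]
    simp only [beq_iff_eq]
    by_cases hwu : w = u₀
    · subst hwu
      rw [if_pos (Sym2.eq_swap), if_pos rfl]
      have hfv : f w = c s(v, w) / 2 - 1 := by rw [hf]; simp
      rw [hfv]
      omega
    · rw [if_neg (fun h => hwu (Sym2.congr_right.mp ((Sym2.eq_swap (a := u₀) (b := v)).symm.trans h)).symm),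
        if_neg (fun h => hwu (Sym2.congr_right.mp h).symm)]
      have hfv : f w = c s(v, w) / 2 := by rw [hf]; simp [hwu]
      rw [hfv]
      omega
  refine ⟨(W₀.takeUntil u₀ hu₀supp).append (C.append (W₀.dropUntil u₀ hu₀supp)), ?_⟩
  intro e he
  have hsplit : ((W₀.takeUntil u₀ hu₀supp).append (C.append (W₀.dropUntil u₀ hu₀supp))).edges.count e
      = W₀.edges.count e + C.edges.count e := by
    conv_rhs => rw [← SimpleGraph.Walk.take_spec W₀ hu₀supp]
    rw [SimpleGraph.Walk.edges_append, SimpleGraph.Walk.edges_append,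
      SimpleGraph.Walk.edges_append, List.count_append, List.count_append, List.count_append]
    ring
  by_cases hvin : v ∈ e
  · obtain ⟨w, hadj, rfl⟩ := exists_rep_of_mem_edge he hvin
    have h0 : W₀.edges.count s(v, w) = 0 :=
      List.count_eq_zero.mpr (fun hmem => hcountv _ hmem hvin)
    rw [hsplit, h0, hC1 w hadj, zero_add]
  · rw [hsplit, hcount₀ e he hvin, hC0 e hvin, add_zero]
lemma chi_le_of_walk [Fintype V] [DecidableEq V] (G : SimpleGraph V) [DecidableRel G.Adj]
    {chi : ℕ}
    (hchi : IsLeast {k : ℕ | 1 ≤ k ∧ ∃ ℓ : Sym2 V → ℕ,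
      (∀ e ∈ G.edgeSet, 1 ≤ ℓ e ∧ ℓ e ≤ k) ∧ IsProperLabelling G ℓ} chi)
    {a b : V} (W : G.Walk a b) (hW : W.Irregularising) :
    chi ≤ (W.edges.toFinset.sup fun e => W.edges.count e) + 1 := by
  apply hchi.2
  refine ⟨Nat.succ_le_succ (Nat.zero_le _), fun e => W.edges.count e + 1, ?_, ?_⟩
  · intro e he
    refine ⟨Nat.succ_le_succ (Nat.zero_le _), ?_⟩
    show W.edges.count e + 1 ≤ (W.edges.toFinset.sup fun e => W.edges.count e) + 1
    by_cases h : e ∈ W.edges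
    · exact Nat.add_le_add_right (Finset.le_sup (f := fun e => W.edges.count e) (List.mem_toFinset.mpr h)) 1
    · rw [List.count_eq_zero.mpr h]
      exact Nat.succ_le_succ (Nat.zero_le _)
  · intro u w hadj
    have hσ : ∀ x, vertexSum G (fun e => W.edges.count e + 1) x = G.degree x + W.inc x := by
      intro x
      rw [vertexSum, Finset.sum_add_distrib, Finset.sum_const, smul_eq_mul, mul_one,
        ← inc_eq_sum_count]
      have hd : (G.neighborFinset x).card = G.degree x := rfl
      rw [hd]; ring
    rw [hσ, hσ]
    exact hW hadj

/-- For a nice graph `G` with maximum degree `Δ`,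
`χ'_s(G) ≤ ME^W(G) + 1` and `ME^W(G) + 1 ≤ 3(1 + Δ·χ'_s(G))`. -/
theorem stmt_7 {V : Type*} [Fintype V] [DecidableEq V] (G : SimpleGraph V)
    [DecidableRel G.Adj] (hconn : G.Connected)
    (hK2 : ¬ Nonempty (G ≃g (⊤ : SimpleGraph (Fin 2))))
    (chi : ℕ)
    (hchi : IsLeast {k : ℕ | 1 ≤ k ∧ ∃ ℓ : Sym2 V → ℕ,
      (∀ e ∈ G.edgeSet, 1 ≤ ℓ e ∧ ℓ e ≤ k) ∧ IsProperLabelling G ℓ} chi) :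
    (chi : ℕ∞) ≤ MEW G + 1 ∧ MEW G + 1 ≤ 3 * (1 + (G.maxDegree : ℕ∞) * (chi : ℕ∞)) := by
  obtain ⟨⟨hchi1, ℓ, hℓbound, hℓprop⟩, hleast⟩ := hchi
  constructor
  · have h1 : ((chi - 1 : ℕ) : ℕ∞) ≤ MEW G := by
      rw [MEW]
      refine le_iInf fun a => le_iInf fun b => le_iInf fun W => le_iInf fun hW => ?_
      have h2 := chi_le_of_walk G ⟨⟨hchi1, ℓ, hℓbound, hℓprop⟩, hleast⟩ W hW
      exact Nat.cast_le.mpr (by omega)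
    have hsplit : chi = (chi - 1) + 1 := by omega
    calc (chi : ℕ∞) = (((chi - 1) + 1 : ℕ) : ℕ∞) := by rw [← hsplit]
      _ = ((chi - 1 : ℕ) : ℕ∞) + 1 := by push_cast; ring
      _ ≤ MEW G + 1 := add_le_add_left h1 1
  · rcases Nat.lt_or_ge (Fintype.card V) 2 with hsm | hbig
    · obtain ⟨r⟩ := hconn.nonempty
      haveI hsub : Subsingleton V := by
        rw [← Fintype.card_le_one_iff_subsingleton]; omega
      have hnil : (SimpleGraph.Walk.nil (u := r) : G.Walk r r).Irregularising := by
        intro u w hadj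
        exact absurd (Subsingleton.elim u w ▸ hadj) (G.irrefl)
      have hMEW : MEW G ≤ 0 := by
        rw [MEW]
        refine iInf_le_of_le r (iInf_le_of_le r (iInf_le_of_le SimpleGraph.Walk.nil
          (iInf_le_of_le hnil ?_)))
        simp
      have h2 : MEW G + 1 ≤ 1 := by
        calc MEW G + 1 ≤ 0 + 1 := add_le_add_left hMEW 1
          _ = 1 := by ring
      refine le_trans h2 ?_
      calc (1 : ℕ∞) ≤ 3 * 1 := by norm_num
        _ ≤ 3 * (1 + (G.maxDegree : ℕ∞) * (chi : ℕ∞)) := mul_le_mul_right le_self_add 3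
    · obtain ⟨r⟩ := hconn.nonempty
      obtain ⟨u1, hu1⟩ := Fintype.exists_ne_of_one_lt_card hbig r
      obtain ⟨p⟩ := hconn u1 r
      obtain ⟨y, hy⟩ := exists_adj_of_walk_ne p hu1
      have hΔ : 1 ≤ G.maxDegree := by
        have h1 : 0 < G.degree u1 := (G.degree_pos_iff_exists_adj u1).mpr ⟨y, hy⟩
        exact le_trans h1 (G.degree_le_maxDegree u1)
      set D := G.maxDegree with hD
      have hcfun : ∀ e ∈ G.edgeSet, 2 ≤ 2 * D * ℓ e ∧ (2 * D * ℓ e) % 2 = 0 := by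
        intro e he
        have h1 := (hℓbound e he).1
        constructor
        · calc 2 = 2 * 1 * 1 := by ring
            _ ≤ 2 * D * ℓ e := by
                exact Nat.mul_le_mul (Nat.mul_le_mul_left 2 hΔ) h1
        · rw [mul_assoc]
          exact Nat.mul_mod_right 2 _
      obtain ⟨W, hW⟩ := exists_walk_counts (Fintype.card V) G rfl hconn r
        (fun e => 2 * D * ℓ e) hcfun
      have hinc : ∀ x, W.inc x = 2 * D * vertexSum G ℓ x := by
        intro x
        rw [inc_eq_sum_count, vertexSum, Finset.mul_sum]
        refine Finset.sum_congr rfl fun w hw => ?_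
        exact hW s(x, w) ((G.mem_neighborFinset x w).mp hw)
      have hIrr : W.Irregularising := by
        intro x z hadj
        rw [hinc, hinc]
        intro heq
        apply hℓprop hadj
        have hdx : G.degree x ≤ D := G.degree_le_maxDegree x
        have hdz : G.degree z ≤ D := G.degree_le_maxDegree z
        have hdx1 : 0 < G.degree x := (G.degree_pos_iff_exists_adj x).mpr ⟨z, hadj⟩
        have hdz1 : 0 < G.degree z := (G.degree_pos_iff_exists_adj z).mpr ⟨x, hadj.symm⟩
        rcases Nat.lt_trichotomy (vertexSum G ℓ x) (vertexSum G ℓ z) with h | h | h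
        · exfalso
          have key : 2 * D * vertexSum G ℓ x + 2 * D ≤ 2 * D * vertexSum G ℓ z := by
            have h3 : vertexSum G ℓ x + 1 ≤ vertexSum G ℓ z := h
            have h4 := Nat.mul_le_mul_left (2 * D) h3
            rw [Nat.mul_add, Nat.mul_one] at h4
            exact h4
          have hD1 : 1 ≤ D := hΔ
          linarith
        · exact h
        · exfalso
          have key : 2 * D * vertexSum G ℓ z + 2 * D ≤ 2 * D * vertexSum G ℓ x := by
            have h3 : vertexSum G ℓ z + 1 ≤ vertexSum G ℓ x := h
            have h4 := Nat.mul_le_mul_left (2 * D) h3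
            rw [Nat.mul_add, Nat.mul_one] at h4
            exact h4
          have hD1 : 1 ≤ D := hΔ
          linarith
      have hsup : (W.edges.toFinset.sup fun e => W.edges.count e) ≤ 2 * D * chi := by
        apply Finset.sup_le
        intro e he
        have hee : e ∈ W.edges := List.mem_toFinset.mp he
        have heE : e ∈ G.edgeSet := W.edges_subset_edgeSet hee
        rw [hW e heE]
        exact Nat.mul_le_mul_left _ ((hℓbound e heE).2)
      have hMEW : MEW G ≤ ((2 * D * chi : ℕ) : ℕ∞) := by
        rw [MEW]
        refine iInf_le_of_le r (iInf_le_of_le r (iInf_le_of_le W (iInf_le_of_le hIrr ?_)))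
        exact Nat.cast_le.mpr hsup
      calc MEW G + 1 ≤ ((2 * D * chi : ℕ) : ℕ∞) + 1 := add_le_add_left hMEW 1
        _ = ((2 * D * chi + 1 : ℕ) : ℕ∞) := by push_cast; ring
        _ ≤ ((3 * (1 + D * chi) : ℕ) : ℕ∞) := by
            refine Nat.cast_le.mpr ?_
            have : 2 * (D * chi) + 1 ≤ 3 * (1 + D * chi) := by omega
            rw [← mul_assoc] at this
            exact this
        _ = 3 * (1 + (D : ℕ∞) * (chi : ℕ∞)) := by push_cast; ring
end

section
/- For every n ≥ 2, ML^W(K_{n,n}) = 2n − 2: the balanced complete bipartite graph K_{n,n} admits an irregularising walk of length 2n − 2, and every irregularising walk of K_{n,n} has length at least 2n − 2. -/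
open SimpleGraph Finset

variable {V : Type*}

instance {α β : Type*} : DecidableRel (completeBipartiteGraph α β).Adj := fun _ _ =>
  inferInstanceAs (Decidable (_ ∨ _))

lemma inc_nil [DecidableEq V] {G : SimpleGraph V} {a : V} (u : V) :
    (Walk.nil : G.Walk a a).inc u = 0 := rfl

lemma inc_cons [DecidableEq V] {G : SimpleGraph V} {a c b : V} (h : G.Adj a c)
    (p : G.Walk c b) (u : V) :
    (Walk.cons h p).inc u = (if u ∈ s(a,c) then 1 else 0) + p.inc u := by
  simp only [Walk.inc, Walk.edges_cons, List.filter_cons]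
  split_ifs with h1 h2 h2 <;> simp_all <;> omega

lemma inc_append [DecidableEq V] {G : SimpleGraph V} {a c b : V}
    (p : G.Walk a c) (q : G.Walk c b) (u : V) :
    (p.append q).inc u = p.inc u + q.inc u := by
  simp [Walk.inc, Walk.edges_append, List.filter_append]

lemma inc_eq_countP [DecidableEq V] {G : SimpleGraph V} {a b : V} (W : G.Walk a b) (u : V) :
    W.inc u = W.edges.countP (fun e => u ∈ e) := by
  simp [Walk.inc, List.countP_eq_length_filter]

lemma even_countP_edges_iff [DecidableEq V] {G : SimpleGraph V} {u v : V} (p : G.Walk u v) (x : V) :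
    Even (p.edges.countP fun e => x ∈ e) ↔ u ≠ v → x ≠ u ∧ x ≠ v := by
  classical
  induction' p with u u v w huv p ih
  · simp
  · simp only [List.countP_cons, Ne, Walk.edges_cons, Sym2.mem_iff]
    split_ifs with h
    · rw [decide_eq_true_eq] at h
      obtain (rfl | rfl) := h
      · rw [Nat.even_add_one, ih]
        simp only [huv.ne, imp_false, Ne, not_false_iff, true_and, not_forall,
          Classical.not_not, exists_prop, eq_self_iff_true, not_true, false_and,
          and_iff_right_iff_imp]
        rintro rfl rfl
        exact G.loopless.irrefl _ huv
      · rw [Nat.even_add_one, ih, ← not_iff_not]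
        simp only [huv.ne.symm, Ne, eq_self_iff_true, not_true, false_and, not_forall,
          not_false_iff, exists_prop, and_true, Classical.not_not, true_and, iff_and_self]
        rintro rfl
        exact huv.ne
    · rw [decide_eq_true_eq, not_or] at h
      simp only [h.1, h.2, not_false_iff, true_and, add_zero, Ne] at ih ⊢
      rw [ih]
      constructor <;>
        · rintro h' h'' rfl
          simp only [imp_false, eq_self_iff_true, not_true, Classical.not_not] at h'
          cases h'
          simp only [not_true, and_false, false_and] at h

lemma even_inc [DecidableEq V] {G : SimpleGraph V} {a b : V} (W : G.Walk a b) (u : V)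
    (ha : u ≠ a) (hb : u ≠ b) : Even (W.inc u) := by
  rw [inc_eq_countP]
  exact (even_countP_edges_iff W u).mpr fun _ => ⟨ha, hb⟩


lemma deg_left {n : ℕ} (x : Fin n) :
    (completeBipartiteGraph (Fin n) (Fin n)).degree (Sum.inl x) = n := by
  have : (completeBipartiteGraph (Fin n) (Fin n)).neighborFinset (Sum.inl x)
      = Finset.univ.map ⟨Sum.inr, Sum.inr_injective⟩ := by
    ext w
    cases w <;> simp [mem_neighborFinset]
  rw [SimpleGraph.degree, this]
  simp

lemma deg_right {n : ℕ} (x : Fin n) :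
    (completeBipartiteGraph (Fin n) (Fin n)).degree (Sum.inr x) = n := by
  have : (completeBipartiteGraph (Fin n) (Fin n)).neighborFinset (Sum.inr x)
      = Finset.univ.map ⟨Sum.inl, Sum.inl_injective⟩ := by
    ext w
    cases w <;> simp [mem_neighborFinset]
  rw [SimpleGraph.degree, this]
  simp

lemma sum_inc_right {n : ℕ} {a b : Fin n ⊕ Fin n}
    (W : (completeBipartiteGraph (Fin n) (Fin n)).Walk a b) :
    ∑ v : Fin n, W.inc (Sum.inr v) = W.length := by
  induction W with
  | nil => simp [Walk.inc]
  | @cons a c b h p ih =>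
    simp only [inc_cons, Finset.sum_add_distrib, ih, Walk.length_cons]
    rcases a with x | x <;> rcases c with y | y <;>
      simp_all [Sym2.mem_iff, Finset.sum_ite_eq, Finset.sum_ite_eq'] <;> omega

lemma sum_inc_left {n : ℕ} {a b : Fin n ⊕ Fin n}
    (W : (completeBipartiteGraph (Fin n) (Fin n)).Walk a b) :
    ∑ v : Fin n, W.inc (Sum.inl v) = W.length := by
  induction W with
  | nil => simp [Walk.inc]
  | @cons a c b h p ih =>
    simp only [inc_cons, Finset.sum_add_distrib, ih, Walk.length_cons]
    rcases a with x | x <;> rcases c with y | y <;>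
      simp_all [Sym2.mem_iff, Finset.sum_ite_eq, Finset.sum_ite_eq'] <;> omega

lemma key {n : ℕ} (hn : 2 ≤ n) (f : Fin n → ℕ) (s : Finset (Fin n)) (hs : s.card ≤ 2)
    (h1 : ∀ v, 1 ≤ f v) (h2 : ∀ v ∉ s, Even (f v)) : 2 * n - 2 ≤ ∑ v, f v := by
  have hsub : s ⊆ Finset.univ := Finset.subset_univ s
  have hsplit := Finset.sum_sdiff (f := f) hsub
  have hA : 2 * (Finset.univ \ s).card ≤ ∑ v ∈ Finset.univ \ s, f v := by
    calc 2 * (Finset.univ \ s).card = ∑ _v ∈ Finset.univ \ s, 2 := by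
          rw [Finset.sum_const]; ring
      _ ≤ ∑ v ∈ Finset.univ \ s, f v := by
          refine Finset.sum_le_sum fun v hv => ?_
          have he := h2 v (Finset.mem_sdiff.mp hv).2
          have := h1 v
          rcases he with ⟨k, hk⟩
          omega
  have hB : s.card ≤ ∑ v ∈ s, f v := by
    calc s.card = ∑ _v ∈ s, 1 := by simp
      _ ≤ _ := Finset.sum_le_sum fun v _ => h1 v
  have hcard : (Finset.univ \ s).card = n - s.card := by
    rw [Finset.card_sdiff_of_subset hsub, Finset.card_univ, Fintype.card_fin]
  have hsn : s.card ≤ n := by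
    calc s.card ≤ Finset.univ.card := Finset.card_le_card hsub
      _ = n := by simp
  omega


lemma card_side_le {n : ℕ} (a b : Fin n ⊕ Fin n) (g : Fin n → Fin n ⊕ Fin n)
    (hg : Function.Injective g) :
    (Finset.univ.filter (fun v => g v = a ∨ g v = b)).card ≤ 2 := by
  have hsub : (Finset.univ.filter (fun v => g v = a ∨ g v = b)) ⊆
      (Finset.univ.filter (fun v => g v = a)) ∪ (Finset.univ.filter (fun v => g v = b)) := by
    intro v hv
    simp only [Finset.mem_filter, Finset.mem_union, Finset.mem_univ, true_and] at *
    tauto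
  have h1 : (Finset.univ.filter (fun v => g v = a)).card ≤ 1 := by
    refine Finset.card_le_one.mpr fun u hu v hv => ?_
    simp only [Finset.mem_filter, Finset.mem_univ, true_and] at hu hv
    exact hg (hu.trans hv.symm)
  have h2 : (Finset.univ.filter (fun v => g v = b)).card ≤ 1 := by
    refine Finset.card_le_one.mpr fun u hu v hv => ?_
    simp only [Finset.mem_filter, Finset.mem_univ, true_and] at hu hv
    exact hg (hu.trans hv.symm)
  calc _ ≤ _ := Finset.card_le_card hsub
    _ ≤ _ := Finset.card_union_le _ _
    _ ≤ 2 := by omega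

lemma lower_bound {n : ℕ} (hn : 2 ≤ n) {a b : Fin n ⊕ Fin n}
    (W : (completeBipartiteGraph (Fin n) (Fin n)).Walk a b)
    (h : W.Irregularising) : 2 * n - 2 ≤ W.length := by
  have hne : ∀ x y : Fin n, W.inc (Sum.inl x) ≠ W.inc (Sum.inr y) := by
    intro x y hxy
    have hadj : (completeBipartiteGraph (Fin n) (Fin n)).Adj (Sum.inl x) (Sum.inr y) := by simp
    exact h hadj (by rw [deg_left, deg_right, hxy])
  by_cases h0 : ∃ x, W.inc (Sum.inl x) = 0
  · obtain ⟨x, hx⟩ := h0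
    have hpos : ∀ y, 1 ≤ W.inc (Sum.inr y) := fun y =>
      Nat.one_le_iff_ne_zero.mpr fun h' => hne x y (hx.trans h'.symm)
    rw [← sum_inc_right W]
    refine key hn _ (Finset.univ.filter (fun v => Sum.inr v = a ∨ Sum.inr v = b))
      (card_side_le a b _ Sum.inr_injective) hpos fun v hv => ?_
    simp only [Finset.mem_filter, Finset.mem_univ, true_and, not_or] at hv
    exact even_inc W _ hv.1 hv.2
  · push_neg at h0
    have hpos : ∀ y, 1 ≤ W.inc (Sum.inl y) := fun y =>
      Nat.one_le_iff_ne_zero.mpr (h0 y)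
    rw [← sum_inc_left W]
    refine key hn _ (Finset.univ.filter (fun v => Sum.inl v = a ∨ Sum.inl v = b))
      (card_side_le a b _ Sum.inl_injective) hpos fun v hv => ?_
    simp only [Finset.mem_filter, Finset.mem_univ, true_and, not_or] at hv
    exact even_inc W _ hv.1 hv.2

def wwalk (n : ℕ) (hn : 0 < n) : (k : ℕ) → (hk : k < n) →
    (completeBipartiteGraph (Fin n) (Fin n)).Walk (Sum.inr ⟨0, hn⟩) (Sum.inr ⟨k, hk⟩)
  | 0, _ => Walk.nil
  | (k+1), hk =>
    (wwalk n hn k (Nat.lt_of_succ_lt hk)).append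
      (Walk.cons
        (show (completeBipartiteGraph (Fin n) (Fin n)).Adj
            (Sum.inr ⟨k, Nat.lt_of_succ_lt hk⟩) (Sum.inl ⟨0, hn⟩) by simp)
        (Walk.cons
          (show (completeBipartiteGraph (Fin n) (Fin n)).Adj
              (Sum.inl ⟨0, hn⟩) (Sum.inr ⟨k+1, hk⟩) by simp)
          Walk.nil))

lemma wwalk_length (n : ℕ) (hn : 0 < n) : ∀ (k : ℕ) (hk : k < n),
    (wwalk n hn k hk).length = 2 * k
  | 0, _ => rfl
  | (k+1), hk => by
    simp only [wwalk, Walk.length_append, Walk.length_cons, Walk.length_nil,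
      wwalk_length n hn k (Nat.lt_of_succ_lt hk)]
    omega

def Fval (n : ℕ) (k : ℕ) : Fin n ⊕ Fin n → ℕ
  | Sum.inl j => if j.val = 0 then 2 * k else 0
  | Sum.inr i => if i.val = 0 then min 1 k else if i.val < k then 2
      else if i.val = k then 1 else 0

lemma wwalk_inc (n : ℕ) (hn : 0 < n) : ∀ (k : ℕ) (hk : k < n) (u : Fin n ⊕ Fin n),
    (wwalk n hn k hk).inc u = Fval n k u
  | 0, hk, u => by
    cases u with
    | inl j => simp [wwalk, Fval, Walk.inc]
    | inr i => simp only [wwalk, Fval]; split_ifs <;> simp_all [Walk.inc] <;> omega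
  | (k+1), hk, u => by
    have ih := wwalk_inc n hn k (Nat.lt_of_succ_lt hk) u
    simp only [wwalk, inc_append, inc_cons, inc_nil, ih]
    cases u with
    | inl j =>
      simp only [Fval, Sym2.mem_iff, Sum.inl.injEq, Fin.mk.injEq, Fin.ext_iff]
      have := j.isLt
      split_ifs <;> simp_all <;> omega
    | inr i =>
      simp only [Fval, Sym2.mem_iff, Sum.inr.injEq, Fin.mk.injEq, Fin.ext_iff]
      have := i.isLt
      split_ifs <;> simp_all <;> omega


/-- for `n ≥ 2`, `ML^W(K_{n,n}) = 2n - 2`: the balanced complete bipartite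
graph `K_{n,n}` admits an irregularising walk of length `2n - 2`, and every
irregularising walk of it has length at least `2n - 2`. -/
theorem stmt_15 (n : ℕ) (hn : 2 ≤ n) :
    (∃ (a b : Fin n ⊕ Fin n) (W : (completeBipartiteGraph (Fin n) (Fin n)).Walk a b),
        W.Irregularising ∧ W.length = 2 * n - 2) ∧
      (∀ (a b : Fin n ⊕ Fin n) (W : (completeBipartiteGraph (Fin n) (Fin n)).Walk a b),
        W.Irregularising → 2 * n - 2 ≤ W.length) := by
  have hn0 : 0 < n := by omega
  have hk : n - 1 < n := by omega
  constructor
  · refine ⟨_, _, wwalk n hn0 (n-1) hk, ?_, ?_⟩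
    · intro u v hadj
      have hu := wwalk_inc n hn0 (n-1) hk u
      have hv := wwalk_inc n hn0 (n-1) hk v
      rw [hu, hv]
      rcases u with x | x <;> rcases v with y | y <;> simp only [completeBipartiteGraph] at hadj
      · simp at hadj
      · rw [deg_left, deg_right]
        have hx := x.isLt
        have hy := y.isLt
        simp only [Fval]
        split_ifs <;> omega
      · rw [deg_right, deg_left]
        have hx := x.isLt
        have hy := y.isLt
        simp only [Fval]
        split_ifs <;> omega
      · simp at hadj
    · rw [wwalk_length]; omega
  · exact fun a b W h => lower_bound hn W h
end
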